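/- Define the cross-ratio of four complex numbers by q(z₁, z₂, z₃, z₄) = ((z₁ − z₂)(z₃ − z₄)) / ((z₂ − z₃)(z₄ − z₁)). Let f : ℂ → ℂ be complex differentiable at z₀ with derivative d ≠ 0. Then q(f(z₀), f(z₀ + ε), f(z₀ + ε + iε), f(z₀ + iε)) tends to −1 as the real parameter ε tends to 0 with ε ≠ 0. (This is the smooth characterization motivating the definition of discrete conformal maps: the elementary quadrilaterals of a conformal map are, in the limit, conformal squares with cross-ratio −1.) -/

import Mathlib

/-- The cross-ratio of four complex numbers. -/
noncomputable def crossRatio (z₁ z₂ z₃ z₄ : ℂ) : ℂ :=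
  ((z₁ - z₂) * (z₃ - z₄)) / ((z₂ - z₃) * (z₄ - z₁))

open Filter

lemma aux_tendsto (f : ℂ → ℂ) (z₀ d : ℂ) (hf : HasDerivAt f d z₀) (a b : ℂ) :
    Tendsto (fun ε : ℝ => (f (z₀ + a * ε) - f (z₀ + b * ε)) / (ε : ℂ))
      (nhdsWithin 0 {0}ᶜ) (nhds (d * (a - b))) := by
  have hcoe : HasDerivAt (fun ε : ℝ => (ε : ℂ)) 1 0 := by
    exact Complex.ofRealCLM.hasDerivAt (x := (0:ℝ))
  have ha : HasDerivAt (fun ε : ℝ => f (z₀ + a * ε)) (d * (a * 1)) 0 := by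
    have hu : HasDerivAt (fun ε : ℝ => z₀ + a * (ε : ℂ)) (a * 1) 0 :=
      (hcoe.const_mul a).const_add z₀
    have : HasDerivAt f d (z₀ + a * ((0:ℝ):ℂ)) := by simpa using hf
    exact this.comp 0 hu
  have hb : HasDerivAt (fun ε : ℝ => f (z₀ + b * ε)) (d * (b * 1)) 0 := by
    have hu : HasDerivAt (fun ε : ℝ => z₀ + b * (ε : ℂ)) (b * 1) 0 :=
      (hcoe.const_mul b).const_add z₀
    have : HasDerivAt f d (z₀ + b * ((0:ℝ):ℂ)) := by simpa using hf
    exact this.comp 0 hu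
  have hsa := hasDerivAt_iff_tendsto_slope.1 ha
  have hsb := hasDerivAt_iff_tendsto_slope.1 hb
  have h := hsa.sub hsb
  have heq : (fun ε : ℝ => slope (fun ε : ℝ => f (z₀ + a * ε)) 0 ε
      - slope (fun ε : ℝ => f (z₀ + b * ε)) 0 ε)
      =ᶠ[nhdsWithin 0 {0}ᶜ] (fun ε : ℝ => (f (z₀ + a * ε) - f (z₀ + b * ε)) / (ε : ℂ)) := by
    filter_upwards [self_mem_nhdsWithin] with ε hε
    have hε' : (ε : ℂ) ≠ 0 := by exact_mod_cast hε
    simp only [slope_def_field, div_eq_inv_mul]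
    simp only [slope, vsub_eq_sub, sub_zero, Complex.real_smul]
    push_cast
    field_simp
    simp
  have := h.congr' heq
  convert this using 2
  ring

theorem crossRatio_tendsto_neg_one (f : ℂ → ℂ) (z₀ d : ℂ)
    (hf : HasDerivAt f d z₀) (hd : d ≠ 0) :
    Filter.Tendsto
      (fun ε : ℝ => crossRatio (f z₀) (f (z₀ + ε)) (f (z₀ + ε + Complex.I * ε))
        (f (z₀ + Complex.I * ε)))
      (nhdsWithin 0 {0}ᶜ) (nhds (-1)) := by
  have h1 := aux_tendsto f z₀ d hf 0 1
  have h2 := aux_tendsto f z₀ d hf (1 + Complex.I) Complex.I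
  have h3 := aux_tendsto f z₀ d hf 1 (1 + Complex.I)
  have h4 := aux_tendsto f z₀ d hf Complex.I 0
  have hden : (d * ((1:ℂ) - (1 + Complex.I))) * (d * (Complex.I - 0)) ≠ 0 := by
    simp only [sub_zero]
    have : (1:ℂ) - (1 + Complex.I) = -Complex.I := by ring
    rw [this]
    simp [hd, Complex.I_ne_zero]
  have hlim := ((h1.mul h2).div (h3.mul h4)) hden
  have hval : (d * ((0:ℂ) - 1)) * (d * ((1 + Complex.I) - Complex.I)) /
      ((d * ((1:ℂ) - (1 + Complex.I))) * (d * (Complex.I - 0))) = -1 := by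
    have hI := Complex.I_sq
    field_simp
    ring_nf
    rw [Complex.I_sq]
  rw [hval] at hlim
  refine hlim.congr' ?_
  filter_upwards [self_mem_nhdsWithin] with ε hε
  have hε' : (ε : ℂ) ≠ 0 := by exact_mod_cast hε
  simp only [crossRatio]
  have e0 : z₀ + (0:ℂ) * ε = z₀ := by ring
  have e1 : z₀ + (1:ℂ) * ε = z₀ + ε := by ring
  have e2 : z₀ + (1 + Complex.I) * ε = z₀ + ε + Complex.I * ε := by ring
  have e3 : z₀ + Complex.I * (ε:ℂ) = z₀ + Complex.I * ε := rfl
  simp only [Pi.div_apply]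
  rw [e0, e1, e2]
  field_simp
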